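/- For a 3×3 unitary matrix T, Re(T₁₁ T₂₂ T₁₂* T₂₁*) = (1/2)(1 − t₁₁ − t₂₂ − t₁₂ − t₂₁ + t₁₁t₂₂ + t₁₂t₂₁), where t_{ij} = |T_{ij}|². -/

import Mathlib

theorem stmt12 (T : Matrix (Fin 3) (Fin 3) ℂ) (hT : T ∈ Matrix.unitaryGroup (Fin 3) ℂ)
    (t : Matrix (Fin 3) (Fin 3) ℝ) (ht : ∀ i j, t i j = ‖T i j‖ ^ 2) :
    (T 0 0 * T 1 1 * (starRingEnd ℂ) (T 0 1) * (starRingEnd ℂ) (T 1 0)).re =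
      (1 / 2) * (1 - t 0 0 - t 1 1 - t 0 1 - t 1 0 + t 0 0 * t 1 1 + t 0 1 * t 1 0) := by
  have h1 : T * star T = 1 := (Matrix.mem_unitaryGroup_iff).mp hT
  have e00 := congrFun (congrFun h1 0) 0
  have e11 := congrFun (congrFun h1 1) 1
  have e01 := congrFun (congrFun h1 0) 1
  simp [Matrix.mul_apply, Fin.sum_univ_three, Matrix.one_apply, Matrix.star_apply] at e00 e11 e01
  have e01c := congrArg (starRingEnd ℂ) e01
  simp only [map_add, map_mul, Complex.conj_conj, map_zero] at e01c
  have key : T 0 0 * T 1 1 * (starRingEnd ℂ) (T 0 1) * (starRingEnd ℂ) (T 1 0) +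
      (starRingEnd ℂ) (T 0 0 * T 1 1 * (starRingEnd ℂ) (T 0 1) * (starRingEnd ℂ) (T 1 0)) =
      1 - T 0 0 * (starRingEnd ℂ) (T 0 0) - T 1 1 * (starRingEnd ℂ) (T 1 1)
        - T 0 1 * (starRingEnd ℂ) (T 0 1) - T 1 0 * (starRingEnd ℂ) (T 1 0)
        + T 0 0 * (starRingEnd ℂ) (T 0 0) * (T 1 1 * (starRingEnd ℂ) (T 1 1))
        + T 0 1 * (starRingEnd ℂ) (T 0 1) * (T 1 0 * (starRingEnd ℂ) (T 1 0)) := by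
    simp only [map_mul, Complex.conj_conj]
    linear_combination (T 1 2 * (starRingEnd ℂ) (T 1 2)) * e00
      + (1 - T 0 0 * (starRingEnd ℂ) (T 0 0) - T 0 1 * (starRingEnd ℂ) (T 0 1)) * e11
      - ((starRingEnd ℂ) (T 0 2) * T 1 2) * e01
      + (T 0 0 * (starRingEnd ℂ) (T 1 0) + T 0 1 * (starRingEnd ℂ) (T 1 1)) * e01c
  rw [Complex.add_conj] at key
  simp only [Complex.mul_conj] at key
  have hr : 2 * (T 0 0 * T 1 1 * (starRingEnd ℂ) (T 0 1) * (starRingEnd ℂ) (T 1 0)).re =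
      1 - Complex.normSq (T 0 0) - Complex.normSq (T 1 1) - Complex.normSq (T 0 1)
        - Complex.normSq (T 1 0) + Complex.normSq (T 0 0) * Complex.normSq (T 1 1)
        + Complex.normSq (T 0 1) * Complex.normSq (T 1 0) := by
    exact_mod_cast key
  simp only [ht, Complex.sq_norm]
  linarith
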